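/- Each of the maps Φ♯_k, Φ♭_k, Φ̃♯_k defined by Φ♯_k(y) = y + 2^{−k}e₂ if α_k(y₁) = 0 else y; Φ♭_k(y) = y − 2^{−k}e₁ if β_k(y₂) ≠ β_{k+1}(y₂) else y; Φ̃♯_k(y) = y + 2^{−k−1}e₂ if α_k(y₁) = 0 else y, preserves Lebesgue measure on ℝ² (up to null sets), and hence so does the composition Ψ_k = Φ̃♯_k ∘ Φ♭_k ∘ Φ♯_k. -/

import Mathlib

open scoped Classical symmDiff

open MeasureTheory Set

/-- The `k`-th binary digit of the fractional part of `x`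
(non-terminating-in-1's convention). -/
noncomputable def dig (k : ℕ) (x : ℝ) : ℤ := ⌊Int.fract x * 2 ^ k⌋ % 2

noncomputable def Φsharp (k : ℕ) (y : ℝ × ℝ) : ℝ × ℝ :=
  if dig k y.1 = 0 then y + ((0 : ℝ), (2 : ℝ) ^ (-(k : ℤ))) else y

noncomputable def Φflat (k : ℕ) (y : ℝ × ℝ) : ℝ × ℝ :=
  if dig k y.2 ≠ dig (k + 1) y.2 then y - ((2 : ℝ) ^ (-(k : ℤ)), (0 : ℝ)) else y

noncomputable def Φtsharp (k : ℕ) (y : ℝ × ℝ) : ℝ × ℝ :=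
  if dig k y.1 = 0 then y + ((0 : ℝ), (2 : ℝ) ^ (-(k : ℤ) - 1)) else y

noncomputable def Ψ (k : ℕ) : ℝ × ℝ → ℝ × ℝ :=
  Φtsharp k ∘ Φflat k ∘ Φsharp k

lemma measurable_dig (k : ℕ) : Measurable (dig k) :=
  (measurable_from_top (f := (· % 2 : ℤ → ℤ))).comp
    ((measurable_fract.mul_const _).floor)

/-- A piecewise translation on a translation-invariant measurable set
preserves Lebesgue measure. -/
lemma mp_piecewise (S : Set (ℝ × ℝ)) (hS : MeasurableSet S) (c : ℝ × ℝ)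
    (hinv : ∀ y : ℝ × ℝ, y + c ∈ S ↔ y ∈ S) :
    MeasurePreserving (fun y => if y ∈ S then y + c else y)
      (volume : Measure (ℝ × ℝ)) volume := by
  have hmeas : Measurable (fun y : ℝ × ℝ => if y ∈ S then y + c else y) := by
    have : (fun y : ℝ × ℝ => if y ∈ S then y + c else y)
        = S.piecewise (fun y => y + c) id := by
      funext y; by_cases h : y ∈ S <;> simp [Set.piecewise, h]
    rw [this]
    exact Measurable.piecewise hS (measurable_add_const c) measurable_id
  refine ⟨hmeas, ?_⟩
  ext A hA
  rw [Measure.map_apply hmeas hA]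
  have hpre : (fun y : ℝ × ℝ => if y ∈ S then y + c else y) ⁻¹' A
      = (((· + c) ⁻¹' A) ∩ S) ∪ (A ∩ Sᶜ) := by
    ext y
    by_cases h : y ∈ S <;> simp [h]
  rw [hpre]
  have hd : Disjoint (((· + c) ⁻¹' A) ∩ S) (A ∩ Sᶜ) :=
    Disjoint.mono inter_subset_right inter_subset_right disjoint_compl_right
  have hmA : MeasurableSet (((· + c) ⁻¹' A) ∩ S) :=
    (hA.preimage (measurable_add_const c)).inter hS
  rw [measure_union hd (hA.inter hS.compl)]
  have hSpre : ((· + c) ⁻¹' S : Set (ℝ × ℝ)) = S := by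
    ext y; exact hinv y
  have h1 : ((· + c) ⁻¹' A) ∩ S = (· + c) ⁻¹' (A ∩ S) := by
    rw [Set.preimage_inter, hSpre]
  rw [h1, (measurePreserving_add_right (volume : Measure (ℝ × ℝ)) c).measure_preimage
    ((hA.inter hS).nullMeasurableSet)]
  rw [← measure_union (Disjoint.mono inter_subset_right inter_subset_right
    disjoint_compl_right) (hA.inter hS.compl)]
  congr 1
  rw [Set.inter_union_compl]

theorem stmt_11 (k : ℕ) :
    MeasurePreserving (Φsharp k) (volume : Measure (ℝ × ℝ)) volume ∧
    MeasurePreserving (Φflat k) (volume : Measure (ℝ × ℝ)) volume ∧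
    MeasurePreserving (Φtsharp k) (volume : Measure (ℝ × ℝ)) volume ∧
    MeasurePreserving (Ψ k) (volume : Measure (ℝ × ℝ)) volume := by
  have hS1 : MeasurableSet {y : ℝ × ℝ | dig k y.1 = 0} :=
    ((measurable_dig k).comp measurable_fst) (MeasurableSet.singleton (0 : ℤ))
  have hS2 : MeasurableSet {y : ℝ × ℝ | dig k y.2 ≠ dig (k + 1) y.2} := by
    have : {y : ℝ × ℝ | dig k y.2 ≠ dig (k + 1) y.2}
        = (fun y : ℝ × ℝ => (dig k y.2, dig (k + 1) y.2)) ⁻¹' {p : ℤ × ℤ | p.1 = p.2}ᶜ := by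
      ext y; simp [Set.mem_setOf_eq]
    rw [this]
    exact (((measurable_dig k).comp measurable_snd).prodMk
      ((measurable_dig (k + 1)).comp measurable_snd))
      (measurableSet_eq_fun measurable_fst measurable_snd).compl
  have h1 : MeasurePreserving (Φsharp k) (volume : Measure (ℝ × ℝ)) volume := by
    have := mp_piecewise {y : ℝ × ℝ | dig k y.1 = 0} hS1
      ((0 : ℝ), (2 : ℝ) ^ (-(k : ℤ)))
      (fun y => by simp [Set.mem_setOf_eq])
    convert this using 1
    funext y; simp only [Φsharp, Set.mem_setOf_eq]
  have h2 : MeasurePreserving (Φflat k) (volume : Measure (ℝ × ℝ)) volume := by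
    have := mp_piecewise {y : ℝ × ℝ | dig k y.2 ≠ dig (k + 1) y.2} hS2
      (-((2 : ℝ) ^ (-(k : ℤ)), (0 : ℝ)))
      (fun y => by simp [Set.mem_setOf_eq, Prod.snd_add, Prod.snd_neg])
    convert this using 1
    funext y
    simp only [Φflat, Set.mem_setOf_eq, sub_eq_add_neg]
  have h3 : MeasurePreserving (Φtsharp k) (volume : Measure (ℝ × ℝ)) volume := by
    have := mp_piecewise {y : ℝ × ℝ | dig k y.1 = 0} hS1
      ((0 : ℝ), (2 : ℝ) ^ (-(k : ℤ) - 1))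
      (fun y => by simp [Set.mem_setOf_eq])
    convert this using 1
    funext y; simp only [Φtsharp, Set.mem_setOf_eq]
  exact ⟨h1, h2, h3, (h3.comp h2).comp h1⟩
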